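/- Let t : ℂ^{n+1} → ℂ^{n+1} be the map t(z) = (i/2)·z. Then for every z ∈ ℂ^{n+1} with z^{n+1} ≠ 0 and every α ∈ {1,…,n}, the real Lie bracket satisfies [t, Z_α](z) = −(i/2)·Z_α(z), i.e. D_ℝZ_α(z)[t(z)] − D_ℝt(z)[Z_α(z)] = −(i/2)·Z_α(z), where D_ℝ denotes the Fréchet derivative of a map ℂ^{n+1} → ℂ^{n+1} regarded as a map between real vector spaces. -/

import Mathlib

open ComplexConjugate

/-- The CR-tangential `(1,0)` vector field `T_β(z) = e_β - conj(z^β) • z` on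
`ℂ^{n+1}`, representing `T_β = ∂/∂z^β - conj(z^β) ∑_γ z^γ ∂/∂z^γ`. -/
noncomputable def sphT (n : ℕ) (β : Fin (n + 1)) (z : Fin (n + 1) → ℂ) :
    Fin (n + 1) → ℂ :=
  (Pi.single β 1 : Fin (n + 1) → ℂ) - conj (z β) • z

/-- The local frame
`Z_α(z) = T_α(z) - (conj(z^α) z^{n+1} / (|z^{n+1}| (1 + |z^{n+1}|))) T_{n+1}(z)`
for the CR structure of the sphere on the set `{z^{n+1} ≠ 0}`. -/
noncomputable def sphZ (n : ℕ) (α : Fin n) (z : Fin (n + 1) → ℂ) :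
    Fin (n + 1) → ℂ :=
  sphT n (Fin.castSucc α) z -
    ((conj (z (Fin.castSucc α)) * z (Fin.last n)) /
        ((‖z (Fin.last n)‖ : ℂ) *
          (1 + (‖z (Fin.last n)‖ : ℂ)))) • sphT n (Fin.last n) z

lemma sphT_smul (n : ℕ) (β : Fin (n+1)) (u : ℂ) (hu : conj u * u = 1)
    (z : Fin (n+1) → ℂ) : sphT n β (u • z) = sphT n β z := by
  unfold sphT
  congr 1
  simp only [Pi.smul_apply, smul_eq_mul, map_mul, smul_smul]
  congr 1
  linear_combination conj (z β) * hu

lemma sphZ_smul (n : ℕ) (α : Fin n) (u : ℂ) (hu : ‖u‖ = 1)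
    (z : Fin (n+1) → ℂ) : sphZ n α (u • z) = sphZ n α z := by
  have hu' : conj u * u = 1 := by
    rw [mul_comm, Complex.mul_conj]
    norm_cast
    simp [Complex.normSq_eq_norm_sq, hu]
  unfold sphZ
  rw [sphT_smul n _ u hu', sphT_smul n _ u hu']
  congr 2
  simp only [Pi.smul_apply, smul_eq_mul, map_mul, norm_mul, hu, one_mul]
  ring_nf
  linear_combination ((starRingEnd ℂ) (z α.castSucc) * z (Fin.last n) *
      (↑(‖z (Fin.last n)‖) + ↑(‖z (Fin.last n)‖) ^ 2)⁻¹) * hu'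

lemma sphT_diff (n : ℕ) (β : Fin (n+1)) (z : Fin (n+1) → ℂ) :
    DifferentiableAt ℝ (sphT n β) z := by
  apply (differentiableAt_const _).sub
  exact ((Complex.conjCLE.differentiable.comp
    ((ContinuousLinearMap.proj β : (Fin (n+1) → ℂ) →L[ℝ] ℂ).differentiable)).differentiableAt).smul
    differentiableAt_id

lemma sphZ_diff (n : ℕ) (α : Fin n) (z : Fin (n+1) → ℂ)
    (hzlast : z (Fin.last n) ≠ 0) : DifferentiableAt ℝ (sphZ n α) z := by
  have hev : DifferentiableAt ℝ (fun w : Fin (n+1) → ℂ => w (Fin.last n)) z :=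
    (ContinuousLinearMap.proj (Fin.last n) : (Fin (n+1) → ℂ) →L[ℝ] ℂ).differentiableAt
  have habs : DifferentiableAt ℝ (fun w : Fin (n+1) → ℂ =>
      (‖w (Fin.last n)‖ : ℂ)) z := by
    have h1 : DifferentiableAt ℝ (fun w : Fin (n+1) → ℂ => ‖w (Fin.last n)‖) z :=
      ((contDiffAt_norm (n := 1) ℂ hzlast).differentiableAt one_ne_zero).comp z hev
    exact Complex.ofRealCLM.differentiableAt.comp z h1
  have hca : DifferentiableAt ℝ (fun w : Fin (n+1) → ℂ => conj (w (Fin.castSucc α))) z :=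
    Complex.conjCLE.differentiableAt.comp z
      (ContinuousLinearMap.proj (Fin.castSucc α) : (Fin (n+1) → ℂ) →L[ℝ] ℂ).differentiableAt
  have hden : ((‖z (Fin.last n)‖ : ℂ) *
      (1 + (‖z (Fin.last n)‖ : ℂ))) ≠ 0 := by
    have h1 : (0:ℝ) < ‖z (Fin.last n)‖ := by
      simpa using (norm_pos_iff.mpr hzlast)
    apply mul_ne_zero
    · exact_mod_cast h1.ne'
    · intro h
      have := congrArg Complex.re h
      simp at this
      linarith
  apply DifferentiableAt.sub (sphT_diff n _ z)
  have hcoef : DifferentiableAt ℝ (fun w : Fin (n+1) → ℂ =>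
      (conj (w (Fin.castSucc α)) * w (Fin.last n)) /
        ((‖w (Fin.last n)‖ : ℂ) *
          (1 + (‖w (Fin.last n)‖ : ℂ)))) z := by
    simp only [div_eq_mul_inv]
    exact (hca.mul hev).mul
      (DifferentiableAt.inv (habs.mul ((differentiableAt_const (1:ℂ)).add habs)) hden)
  exact hcoef.smul (sphT_diff n _ z)

/-- Let `t(z) = (i/2) z`, representing the characteristic
direction `T` of the CR sphere.  Then for every `z` with `z^{n+1} ≠ 0` and every
`α ∈ {1, …, n}`, the real Lie bracket satisfies
`[t, Z_α](z) = D_ℝ Z_α(z)[t(z)] - D_ℝ t(z)[Z_α(z)] = -(i/2) • Z_α(z)`,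
where `D_ℝ` is the Fréchet derivative over `ℝ`. -/
theorem stmt13 (n : ℕ) (hn : 1 ≤ n) (α : Fin n) (z : Fin (n + 1) → ℂ)
    (hzlast : z (Fin.last n) ≠ 0) :
    fderiv ℝ (sphZ n α) z ((Complex.I / 2) • z)
        - fderiv ℝ (fun w : Fin (n + 1) → ℂ => (Complex.I / 2) • w) z (sphZ n α z)
      = (-(Complex.I / 2)) • sphZ n α z := by
  have hdiff := sphZ_diff n α z hzlast
  have hexp : HasDerivAt (fun θ : ℝ => Complex.exp ((θ : ℂ) * (Complex.I / 2)))
      (Complex.I / 2) 0 := by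
    have h0 : HasDerivAt (fun θ : ℝ => (θ : ℂ) * (Complex.I / 2)) (Complex.I / 2) 0 := by
      simpa using (Complex.ofRealCLM.hasDerivAt (x := (0 : ℝ))).mul_const (Complex.I / 2)
    simpa using h0.cexp
  have hγ : HasDerivAt (fun θ : ℝ => Complex.exp ((θ : ℂ) * (Complex.I / 2)) • z)
      ((Complex.I / 2) • z) 0 := by simpa using hexp.smul_const z
  have h00 : (Complex.exp (((0 : ℝ) : ℂ) * (Complex.I / 2)) • z) = z := by simp
  have hcomp : HasDerivAt
      (fun θ : ℝ => sphZ n α (Complex.exp ((θ : ℂ) * (Complex.I / 2)) • z))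
      (fderiv ℝ (sphZ n α) z ((Complex.I / 2) • z)) 0 := by
    have h := hdiff.hasFDerivAt
    rw [← h00] at h
    simpa [Function.comp_def, h00] using HasFDerivAt.comp_hasDerivAt 0 h hγ
  have hconst : (fun θ : ℝ => sphZ n α (Complex.exp ((θ : ℂ) * (Complex.I / 2)) • z))
      = fun _ => sphZ n α z := by
    funext θ
    refine sphZ_smul n α _ ?_ z
    simp [Complex.norm_exp]
  have hzero : fderiv ℝ (sphZ n α) z ((Complex.I / 2) • z) = 0 := by
    have h2 : HasDerivAt (fun _ : ℝ => sphZ n α z)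
        (fderiv ℝ (sphZ n α) z ((Complex.I / 2) • z)) 0 := hconst ▸ hcomp
    exact h2.unique (hasDerivAt_const 0 _)
  have hlin : fderiv ℝ (fun w : Fin (n + 1) → ℂ => (Complex.I / 2) • w) z (sphZ n α z)
      = (Complex.I / 2) • sphZ n α z := by
    have he : (fun w : Fin (n + 1) → ℂ => (Complex.I / 2) • w)
        = ((Complex.I / 2) • ContinuousLinearMap.id ℝ (Fin (n + 1) → ℂ) :
            (Fin (n + 1) → ℂ) →L[ℝ] (Fin (n + 1) → ℂ)) := rfl
    rw [he, ContinuousLinearMap.fderiv]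
    rfl
  rw [hzero, hlin, zero_sub, neg_smul]
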